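/- If V is a finite-dimensional 𝔤-module, then the weight multiplicities of V are invariant under the Weyl group: mult_V(wμ) = mult_V(μ) for all w ∈ W and all μ ∈ 𝔥*. -/

import Mathlib

/- Setting: `L` is a finite-dimensional semisimple Lie algebra over an algebraically
closed field `k` of characteristic zero (semisimplicity is expressed by the
characteristic-zero-equivalent Mathlib typeclass `LieAlgebra.IsKilling`, nondegeneracy
of the Killing form), with a splitting Cartan subalgebra `H`.  Weights live in
`𝔥* = Module.Dual k H`. -/

open LieAlgebra LieModule
open scoped Classical

noncomputable section

variable (k : Type) [Field k] [IsAlgClosed k] [CharZero k]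
variable (L : Type) [LieRing L] [LieAlgebra k L] [FiniteDimensional k L]
  [LieAlgebra.IsKilling k L]
variable (H : LieSubalgebra k L) [H.IsCartanSubalgebra]
variable (M : Type) [AddCommGroup M] [Module k M] [LieRingModule L M] [LieModule k L M]

/-- The weight space `M_χ = {m | ⁅h, m⁆ = χ(h) • m for all h ∈ H}` of the `L`-module
`M`, for an arbitrary linear functional `χ ∈ 𝔥*`. -/
def wtSpace (χ : Module.Dual k H) : Submodule k M where
  carrier := {m | ∀ h : H, ⁅(h : L), m⁆ = χ h • m}
  add_mem' := by
    intro a b ha hb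
    intro h
    rw [lie_add, ha h, hb h, smul_add]
  zero_mem' := by
    intro h
    rw [lie_zero, smul_zero]
  smul_mem' := by
    intro c m hm
    intro h
    rw [lie_smul, hm h, smul_comm]

/-- the multiplicity `mult_M(χ)` of the weight `χ` in `M` -/
def multW (χ : Module.Dual k H) : ℕ := Module.finrank k (wtSpace k L H M χ)

/-- The Weyl group of `(L, H)`: the subgroup of linear automorphisms of `𝔥*` generated
by the reflections `μ ↦ μ - μ(α^∨) α` in the (nonzero) roots `α` of `L` w.r.t. `H`. -/
def lieWeyl : Subgroup ((Module.Dual k H) ≃ₗ[k] (Module.Dual k H)) :=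
  Subgroup.closure {g | ∃ α : Weight k H L, α.IsNonZero ∧
    ∀ μ : Module.Dual k H,
      g μ = μ - μ (IsKilling.coroot α) • (α : Module.Dual k H)}

/-- the Weyl vector `ρ`: half the sum of the positive roots `Rp` -/
def rhoW (Rp : Finset (Weight k H L)) : Module.Dual k H :=
  (2 : k)⁻¹ • ∑ α ∈ Rp, (α : Module.Dual k H)

/-- the formal exponential `e^μ` in the group ring -/
def expoL (μ : Module.Dual k H) : AddMonoidAlgebra ℤ (Module.Dual k H) :=
  AddMonoidAlgebra.single μ 1

/-- the formal character `ch_M = ∑_μ mult_M(μ) e^μ` of `M` -/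
def chL : AddMonoidAlgebra ℤ (Module.Dual k H) :=
  ∑ᶠ μ : Module.Dual k H, (multW k L H M μ : ℤ) • expoL k L H μ

set_option linter.unusedSectionVars false
set_option maxHeartbeats 1600000

section ExpAux

open Finset

variable {K : Type*} [Field K] [CharZero K]

section Alg
variable {A : Type*} [Ring A] [Algebra K A]

/-- truncated exponential series -/
def expS (N : ℕ) (x : A) : A := ∑ i ∈ Finset.range N, (i.factorial : K)⁻¹ • x ^ i

lemma pow_eq_zero_mono {x : A} {m n : ℕ} (h : x ^ m = 0) (hmn : m ≤ n) : x ^ n = 0 := by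
  rw [← Nat.sub_add_cancel hmn, pow_add, h, mul_zero]

lemma neg_pow_eq_zero {x : A} {m : ℕ} (h : x ^ m = 0) : (-x) ^ m = 0 := by
  rw [neg_pow, h, mul_zero]

lemma add_pow_eq_zero' {x y : A} {m : ℕ} (hc : Commute x y) (hx : x ^ m = 0) (hy : y ^ m = 0) :
    (x + y) ^ (2 * m) = 0 := by
  rw [hc.add_pow]
  refine Finset.sum_eq_zero fun i hi => ?_
  rw [Finset.mem_range] at hi
  rcases le_or_gt m i with h | h
  · rw [pow_eq_zero_mono hx h, zero_mul, zero_mul]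
  · rw [pow_eq_zero_mono hy (by omega), mul_zero, zero_mul]

lemma commute_expS {x y : A} (h : Commute x y) (N : ℕ) : Commute (expS (K := K) N x) y :=
  Commute.sum_left _ _ _ fun i _ => ((h.pow_left i).smul_left _)

lemma expS_add {x y : A} {m N : ℕ} (hc : Commute x y) (hx : x ^ m = 0) (hy : y ^ m = 0)
    (hN : 2 * m ≤ N) : expS (K := K) N (x + y) = expS (K := K) N x * expS (K := K) N y := by
  rcases Nat.eq_zero_or_pos m with hm | hm
  · subst hm
    have : (1 : A) = 0 := by simpa using hx
    haveI := subsingleton_of_zero_eq_one this.symm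
    exact Subsingleton.elim _ _
  have hmN : m ≤ N := le_trans (by omega) hN
  set g : ℕ → ℕ → A := fun i j => ((i.factorial : K)⁻¹ * (j.factorial : K)⁻¹) • (x ^ i * y ^ j)
    with hg
  have hg0 : ∀ i j, m ≤ i ∨ m ≤ j → g i j = 0 := by
    rintro i j (h | h)
    · simp [hg, pow_eq_zero_mono hx h]
    · simp [hg, pow_eq_zero_mono hy h]
  have hRHS : expS (K := K) N x * expS (K := K) N y = ∑ i ∈ range N, ∑ j ∈ range N, g i j := by
    rw [expS, expS, Finset.sum_mul_sum]
    refine Finset.sum_congr rfl fun i _ => Finset.sum_congr rfl fun j _ => ?_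
    rw [smul_mul_assoc, mul_smul_comm, smul_smul]
  have houter : ∀ (F G : ℕ → A), (∀ i, i ∈ range N → i ∉ range m → F i = 0) →
      (∀ i, i ∈ range m → F i = G i) → ∑ i ∈ range N, F i = ∑ i ∈ range m, G i := by
    intro F G h1 h2
    rw [← Finset.sum_subset (Finset.range_subset_range.mpr hmN) h1]
    exact Finset.sum_congr rfl h2
  have hRHS' : ∑ i ∈ range N, ∑ j ∈ range N, g i j = ∑ i ∈ range m, ∑ j ∈ range m, g i j := by
    refine houter _ _ (fun i _ hi => ?_) (fun i _ => ?_)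
    · exact Finset.sum_eq_zero fun j _ => hg0 i j (Or.inl (by simpa using hi))
    · exact houter _ _ (fun j _ hj => hg0 i j (Or.inr (by simpa using hj))) (fun _ _ => rfl)
  have hterm : ∀ n, n ∈ range N → (n.factorial : K)⁻¹ • (x + y) ^ n
      = ∑ i ∈ range (n + 1), g i (n - i) := by
    intro n _
    rw [hc.add_pow, Finset.smul_sum]
    refine Finset.sum_congr rfl fun i hi => ?_
    rw [Finset.mem_range] at hi
    have hin : i ≤ n := by omega
    have hfact : (n.factorial : K)⁻¹ * (n.choose i : K)
        = (i.factorial : K)⁻¹ * ((n - i).factorial : K)⁻¹ := by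
      have h := Nat.choose_mul_factorial_mul_factorial hin
      have h' : ((n.choose i : K) * i.factorial * (n - i).factorial) = n.factorial := by
        exact_mod_cast congrArg (Nat.cast : ℕ → K) h
      have hi0 : (i.factorial : K) ≠ 0 := Nat.cast_ne_zero.mpr i.factorial_ne_zero
      have hni0 : ((n - i).factorial : K) ≠ 0 := Nat.cast_ne_zero.mpr (n - i).factorial_ne_zero
      have hn0 : (n.factorial : K) ≠ 0 := Nat.cast_ne_zero.mpr n.factorial_ne_zero
      field_simp
      linear_combination h'
    have hcast : x ^ i * y ^ (n - i) * (n.choose i : A)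
        = ((n.choose i : K)) • (x ^ i * y ^ (n - i)) := by
      rw [← (Nat.cast_commute (n.choose i) (x ^ i * y ^ (n - i))).eq, ← nsmul_eq_mul,
        ← Nat.cast_smul_eq_nsmul K]
    rw [hcast, smul_smul, hfact]
  have hLHS : expS (K := K) N (x + y) = ∑ n ∈ range N, ∑ i ∈ range (n + 1), g i (n - i) := by
    rw [expS]; exact Finset.sum_congr rfl hterm
  have hstep : ∀ n, n ∈ range N → ∑ i ∈ range (n + 1), g i (n - i)
      = ∑ i ∈ range N, if i ≤ n then g i (n - i) else 0 := by
    intro n hn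
    rw [Finset.mem_range] at hn
    rw [Finset.sum_ite, Finset.sum_const_zero, add_zero]
    apply Finset.sum_congr _ (fun _ _ => rfl)
    ext i
    simp only [Finset.mem_filter, Finset.mem_range]
    omega
  rw [hLHS, Finset.sum_congr rfl hstep, Finset.sum_comm]
  have hinner : ∀ i, i ∈ range N → ∑ n ∈ range N, (if i ≤ n then g i (n - i) else 0)
      = ∑ j ∈ range (N - i), g i j := by
    intro i hi
    rw [Finset.mem_range] at hi
    rw [Finset.sum_ite, Finset.sum_const_zero, add_zero]
    have : Finset.filter (fun n => i ≤ n) (range N) = Finset.Ico i N := by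
      ext n; simp only [Finset.mem_filter, Finset.mem_range, Finset.mem_Ico]; omega
    rw [this, Finset.sum_Ico_eq_sum_range]
    exact Finset.sum_congr rfl fun j _ => by congr 1; omega
  rw [Finset.sum_congr rfl hinner, hRHS, hRHS']
  refine houter _ _ (fun i _ hi => ?_) (fun i hi => ?_)
  · exact Finset.sum_eq_zero fun j _ => hg0 i j (Or.inl (by simpa using hi))
  · rw [Finset.mem_range] at hi
    refine (Finset.sum_subset (Finset.range_subset_range.mpr (by omega)) fun j _ hj => ?_).symm
    exact hg0 i j (Or.inr (by simpa using hj))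

lemma expS_zero' {N : ℕ} (hN : 1 ≤ N) : expS (K := K) N (0 : A) = 1 := by
  rw [expS]
  rw [Finset.sum_eq_single 0]
  · simp
  · intro i _ hi; simp [zero_pow hi]
  · intro h; exact absurd (Finset.mem_range.mpr hN) h

lemma isUnit_expS {x : A} {m N : ℕ} (hx : x ^ m = 0) (hN : 2 * m ≤ N) (hN1 : 1 ≤ N) :
    IsUnit (expS (K := K) N x) := by
  have hneg : (-x) ^ m = 0 := neg_pow_eq_zero hx
  have h1 : expS (K := K) N x * expS (K := K) N (-x) = 1 := by
    rw [← expS_add (Commute.refl x).neg_right hx hneg hN, add_neg_cancel, expS_zero' hN1]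
  have h2 : expS (K := K) N (-x) * expS (K := K) N x = 1 := by
    rw [← expS_add (Commute.refl x).neg_left hneg hx hN, neg_add_cancel, expS_zero' hN1]
  exact ⟨⟨_, _, h1, h2⟩, rfl⟩
end Alg

section Apply
variable {V : Type*} [AddCommGroup V] [Module K V]

lemma expS_apply (N : ℕ) (f : Module.End K V) (v : V) :
    expS (K := K) N f v = ∑ i ∈ Finset.range N, (i.factorial : K)⁻¹ • (f ^ i) v := by
  simp [expS, LinearMap.sum_apply]

lemma expS_apply_of_pow {j N : ℕ} {f : Module.End K V} {v : V} (h : (f ^ j) v = 0) (hN : j ≤ N) :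
    expS (K := K) N f v = ∑ i ∈ Finset.range j, (i.factorial : K)⁻¹ • (f ^ i) v := by
  rw [expS_apply]
  refine (Finset.sum_subset (Finset.range_subset_range.mpr hN) fun i _ hi => ?_).symm
  rw [Finset.mem_range, not_lt] at hi
  have : (f ^ i) v = 0 := by
    rw [← Nat.sub_add_cancel hi, pow_add, Module.End.mul_apply, h, map_zero]
  rw [this, smul_zero]

lemma expS_apply_two {N : ℕ} {f : Module.End K V} {v : V} (hN : 2 ≤ N) (h : f (f v) = 0) :
    expS (K := K) N f v = v + f v := by
  have h2 : (f ^ 2) v = 0 := by rwa [pow_two, Module.End.mul_apply]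
  rw [expS_apply_of_pow h2 hN]
  simp [Finset.sum_range_succ]

lemma expS_apply_three {N : ℕ} {f : Module.End K V} {v : V} (hN : 3 ≤ N) (h : f (f (f v)) = 0) :
    expS (K := K) N f v = v + f v + (2 : K)⁻¹ • f (f v) := by
  have h3 : (f ^ 3) v = 0 := by rwa [pow_succ, pow_two, Module.End.mul_apply, Module.End.mul_apply]
  rw [expS_apply_of_pow h3 hN]
  simp [Finset.sum_range_succ, pow_two, Nat.factorial]
end Apply

end ExpAux

lemma expS_toEnd_comm (x z : L) {m N : ℕ} (hm : (toEnd k L M x) ^ m = 0) (hN : 4 * m ≤ N) :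
    expS (K := k) N (toEnd k L M x) * toEnd k L M z
      = toEnd k L M (expS (K := k) N (LieAlgebra.ad k L x) z)
        * expS (K := k) N (toEnd k L M x) := by
  set X := toEnd k L M x with hX
  set S := expS (K := k) N X with hS
  set ML := LinearMap.mulLeft k X with hML'
  set MR := LinearMap.mulRight k X with hMR'
  set D := ML - MR with hD'
  have hML : ML ^ m = 0 := by
    rw [hML', LinearMap.pow_mulLeft, hm, LinearMap.mulLeft_zero_eq_zero]
  have hMR : MR ^ m = 0 := by
    rw [hMR', LinearMap.pow_mulRight, hm, LinearMap.mulRight_zero_eq_zero]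
  have hcLR : Commute ML MR := LinearMap.commute_mulLeft_right X X
  have hD2m : D ^ (2 * m) = 0 := by
    rw [hD', sub_eq_add_neg]
    exact add_pow_eq_zero' hcLR.neg_right hML (neg_pow_eq_zero hMR)
  have hDMR : Commute D MR := hcLR.sub_left (Commute.refl MR)
  have hsplit : expS (K := k) N ML = expS (K := k) N D * expS (K := k) N MR := by
    rw [← expS_add hDMR hD2m (pow_eq_zero_mono hMR (by omega)) (by omega)]
    congr 1
    rw [hD', sub_add_cancel]
  have happML : ∀ Z : Module.End k M, expS (K := k) N ML Z = S * Z := by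
    intro Z
    rw [expS_apply, hS, expS, Finset.sum_mul]
    refine Finset.sum_congr rfl fun i _ => ?_
    rw [hML', LinearMap.pow_mulLeft, LinearMap.mulLeft_apply, smul_mul_assoc]
  have happMR : ∀ Z : Module.End k M, expS (K := k) N MR Z = Z * S := by
    intro Z
    rw [expS_apply, hS, expS, Finset.mul_sum]
    refine Finset.sum_congr rfl fun i _ => ?_
    rw [hMR', LinearMap.pow_mulRight, LinearMap.mulRight_apply, mul_smul_comm]
  have hDapp : ∀ w : L, D (toEnd k L M w) = toEnd k L M ⁅x, w⁆ := by
    intro w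
    letI : LieRing (Module.End k M) := LieRing.ofAssociativeRing
    have h1 : toEnd k L M ⁅x, w⁆ = ⁅X, toEnd k L M w⁆ := LieHom.map_lie _ _ _
    rw [Ring.lie_def] at h1
    rw [hD', LinearMap.sub_apply, hML', hMR', LinearMap.mulLeft_apply, LinearMap.mulRight_apply,
      h1]
  have hDpow : ∀ (i : ℕ) (w : L),
      (D ^ i) (toEnd k L M w) = toEnd k L M (((LieAlgebra.ad k L x) ^ i) w) := by
    intro i
    induction i with
    | zero => intro w; simp
    | succ n ih =>
      intro w
      rw [pow_succ, pow_succ, Module.End.mul_apply, Module.End.mul_apply, hDapp, ih,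
        LieAlgebra.ad_apply]
  have hDexp : ∀ w : L,
      expS (K := k) N D (toEnd k L M w)
        = toEnd k L M (expS (K := k) N (LieAlgebra.ad k L x) w) := by
    intro w
    letI : LieRing (Module.End k M) := LieRing.ofAssociativeRing
    rw [expS_apply, expS_apply, ← LieHom.coe_toLinearMap, map_sum]
    refine Finset.sum_congr rfl fun i _ => ?_
    rw [map_smul, LieHom.coe_toLinearMap, hDpow]
  have hSX : S * X = X * S := ((commute_expS (Commute.refl X) N).eq)
  have hDS : ∀ W : Module.End k M, D (W * S) = D W * S := by
    intro W
    rw [hD', LinearMap.sub_apply, LinearMap.sub_apply, hML', hMR', LinearMap.mulLeft_apply,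
      LinearMap.mulLeft_apply, LinearMap.mulRight_apply, LinearMap.mulRight_apply, sub_mul,
      mul_assoc, mul_assoc, mul_assoc, hSX]
  have hDSpow : ∀ (i : ℕ) (W : Module.End k M), (D ^ i) (W * S) = (D ^ i) W * S := by
    intro i
    induction i with
    | zero => intro W; simp
    | succ n ih =>
      intro W
      rw [pow_succ, Module.End.mul_apply, Module.End.mul_apply, hDS, ih]
  have hDexpS : ∀ W : Module.End k M, expS (K := k) N D (W * S) = expS (K := k) N D W * S := by
    intro W
    rw [expS_apply, expS_apply, Finset.sum_mul]
    exact Finset.sum_congr rfl fun i _ => by rw [hDSpow, smul_mul_assoc]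
  calc S * toEnd k L M z = expS (K := k) N ML (toEnd k L M z) := (happML _).symm
    _ = expS (K := k) N D (expS (K := k) N MR (toEnd k L M z)) := by
        rw [hsplit, Module.End.mul_apply]
    _ = expS (K := k) N D (toEnd k L M z * S) := by rw [happMR]
    _ = expS (K := k) N D (toEnd k L M z) * S := hDexpS _
    _ = toEnd k L M (expS (K := k) N (LieAlgebra.ad k L x) z) * S := by rw [hDexp]

lemma isNilpotent_toEnd_rootSpace [FiniteDimensional k M] {β : H → k} (hβ : β ≠ 0) {x : L}
    (hx : x ∈ rootSpace H β) : IsNilpotent (toEnd k L M x) := by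
  set X := toEnd k L M x with hX
  have hmap : ∀ (χ : H → k) (n : ℕ), ∀ m ∈ genWeightSpace M χ,
      (X ^ n) m ∈ genWeightSpace M (n • β + χ) := by
    intro χ n
    induction n with
    | zero => intro m hm; simpa using hm
    | succ n ih =>
      intro m hm
      have h1 := mapsTo_toEnd_genWeightSpace_add_of_mem_rootSpace k L H M β (n • β + χ) hx
        (ih m hm)
      have h2 : β + (n • β + χ) = (n + 1) • β + χ := by rw [succ_nsmul]; abel
      rw [pow_succ', Module.End.mul_apply]
      rw [h2] at h1
      exact h1
  choose! nf hnf0 hnf using fun χ : Weight k H M =>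
    exists_genWeightSpace_smul_add_eq_bot M β (χ : H → k) hβ
  haveI : Fintype (Weight k H M) := Fintype.ofFinite _
  set nb := Finset.univ.sup nf with hnb
  refine ⟨nb, ?_⟩
  ext m
  simp only [LinearMap.zero_apply]
  have hm : m ∈ (⊤ : LieSubmodule k H M) := trivial
  rw [← iSup_genWeightSpace_eq_top' k H M] at hm
  refine LieSubmodule.iSup_induction (motive := fun y => (X ^ nb) y = 0) _ hm (fun χ m hm => ?_)
    (by simp) (fun u v hu hv => by
      have hu' : (X ^ nb) u = 0 := hu
      have hv' : (X ^ nb) v = 0 := hv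
      show (X ^ nb) (u + v) = 0
      rw [map_add, hu', hv', add_zero])
  show (X ^ nb) m = 0
  have h1 : (X ^ (nf χ)) m ∈ genWeightSpace M ((nf χ) • β + (χ : H → k)) := hmap _ _ m hm
  rw [hnf χ] at h1
  have h1' : (X ^ nf χ) m = 0 := by simpa using h1
  have hle : nf χ ≤ nb := Finset.le_sup (Finset.mem_univ χ)
  rw [← Nat.sub_add_cancel hle, pow_add, Module.End.mul_apply, h1', map_zero]

lemma multW_le_reflection [FiniteDimensional k M] (α : Weight k H L) (hα : α.IsNonZero)
    (μ : Module.Dual k H) :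
    multW k L H M μ ≤ multW k L H M (μ - μ (IsKilling.coroot α) • (α : Module.Dual k H)) := by
  obtain ⟨hl, e, f, ht, heα, hfα⟩ := IsKilling.exists_isSl2Triple_of_weight_isNonZero hα
  have hcor : hl = ((IsKilling.coroot α : H) : L) := ht.h_eq_coroot hα heα hfα
  set c : H := IsKilling.coroot α with hc
  have hαc : α c = 2 := IsKilling.root_apply_coroot hα
  -- bracket relations
  have hhe : ∀ h : H, ⁅(h : L), e⁆ = α h • e := fun h => by
    rw [← LieSubalgebra.coe_bracket_of_module]
    exact IsKilling.lie_eq_smul_of_mem_rootSpace heα h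
  have hhf : ∀ h : H, ⁅(h : L), f⁆ = -(α h) • f := fun h => by
    rw [← LieSubalgebra.coe_bracket_of_module]
    have := IsKilling.lie_eq_smul_of_mem_rootSpace hfα h
    simpa using this
  have hef : ⁅e, f⁆ = ((c : H) : L) := by rw [ht.lie_e_f, hcor]
  -- nilpotency
  have hαne : (α : H → k) ≠ 0 := hα
  obtain ⟨m₁, hm₁⟩ := isNilpotent_toEnd_rootSpace k L H M hαne heα
  obtain ⟨m₂, hm₂⟩ := isNilpotent_toEnd_rootSpace k L H M (neg_ne_zero.mpr hαne) hfα
  set m := max m₁ m₂ with hm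
  have hEm : (toEnd k L M e) ^ m = 0 := pow_eq_zero_mono hm₁ (le_max_left _ _)
  have hFm : (toEnd k L M f) ^ m = 0 := pow_eq_zero_mono hm₂ (le_max_right _ _)
  have hFm' : (toEnd k L M (-f)) ^ m = 0 := by
    rw [map_neg]; exact neg_pow_eq_zero hFm
  set N := 4 * m + 3 with hN
  set σe := expS (K := k) N (LieAlgebra.ad k L e) with hσe
  set σf := expS (K := k) N (LieAlgebra.ad k L (-f)) with hσf
  set A := expS (K := k) N (toEnd k L M e) with hA
  set B := expS (K := k) N (toEnd k L M (-f)) with hB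
  set θ := A * B * A with hθ
  have hAz : ∀ z : L, A * toEnd k L M z = toEnd k L M (σe z) * A := fun z =>
    expS_toEnd_comm k L M e z hEm (by omega)
  have hBz : ∀ z : L, B * toEnd k L M z = toEnd k L M (σf z) * B := fun z =>
    expS_toEnd_comm k L M (-f) z hFm' (by omega)
  have hθz : ∀ z : L, θ * toEnd k L M z = toEnd k L M (σe (σf (σe z))) * θ := by
    intro z
    rw [hθ, mul_assoc (A * B) A, hAz z, ← mul_assoc (A * B), mul_assoc A B, hBz (σe z),
      ← mul_assoc A, hAz (σf (σe z)), mul_assoc _ A B, mul_assoc _ (A * B) A]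
  have hθunit : IsUnit θ :=
    ((isUnit_expS hEm (by omega) (by omega)).mul (isUnit_expS hFm' (by omega) (by omega))).mul
      (isUnit_expS hEm (by omega) (by omega))
  -- the sigma computation
  have hσee : σe e = e := by
    rw [hσe, expS_apply_two (by omega) (by simp [LieAlgebra.ad_apply])]
    simp [LieAlgebra.ad_apply]
  have hσec : σe ((c : H) : L) = ((c : H) : L) - (2 : k) • e := by
    have h1 : (LieAlgebra.ad k L e) ((c : H) : L) = -((2 : k) • e) := by
      rw [LieAlgebra.ad_apply, ← lie_skew, hhe c, hαc]
    rw [hσe, expS_apply_two (by omega) (by rw [h1]; simp [LieAlgebra.ad_apply]), h1]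
    module
  have hσeh : ∀ h : H, σe ((h : H) : L) = ((h : H) : L) - α h • e := by
    intro h
    have h1 : (LieAlgebra.ad k L e) ((h : H) : L) = -(α h • e) := by
      rw [LieAlgebra.ad_apply, ← lie_skew, hhe h]
    rw [hσe, expS_apply_two (by omega) (by rw [h1]; simp [LieAlgebra.ad_apply]), h1]
    module
  have hσfh : ∀ h : H, σf ((h : H) : L) = ((h : H) : L) - α h • f := by
    intro h
    have h1 : (LieAlgebra.ad k L (-f)) ((h : H) : L) = -(α h • f) := by
      rw [LieAlgebra.ad_apply, neg_lie, ← lie_skew, neg_neg, hhf h]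
      module
    rw [hσf, expS_apply_two (by omega) (by rw [h1]; simp [LieAlgebra.ad_apply]), h1]
    module
  have hσfe : σf e = e + ((c : H) : L) - f := by
    have h1 : (LieAlgebra.ad k L (-f)) e = ((c : H) : L) := by
      rw [LieAlgebra.ad_apply, neg_lie, ← lie_skew, neg_neg, hef]
    have h2 : (LieAlgebra.ad k L (-f)) (((c : H) : L)) = -((2 : k) • f) := by
      rw [LieAlgebra.ad_apply, neg_lie, ← lie_skew, neg_neg, hhf c, hαc]
      module
    have h3 : (LieAlgebra.ad k L (-f)) ((LieAlgebra.ad k L (-f)) ((LieAlgebra.ad k L (-f)) e))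
        = 0 := by
      rw [h1, h2]
      simp [LieAlgebra.ad_apply]
    rw [hσf, expS_apply_three (by omega) h3, h1, h2]
    have h4 : (2 : k)⁻¹ • (-((2 : k) • f)) = -f := by
      rw [smul_neg, smul_smul, inv_mul_cancel₀ (two_ne_zero), one_smul]
    rw [h4]
    abel
  have hσef : σe f = f + ((c : H) : L) - e := by
    have h1 : (LieAlgebra.ad k L e) f = ((c : H) : L) := by rw [LieAlgebra.ad_apply, hef]
    have h2 : (LieAlgebra.ad k L e) (((c : H) : L)) = -((2 : k) • e) := by
      rw [LieAlgebra.ad_apply, ← lie_skew, hhe c, hαc]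
    have h3 : (LieAlgebra.ad k L e) ((LieAlgebra.ad k L e) ((LieAlgebra.ad k L e) f)) = 0 := by
      rw [h1, h2]
      simp [LieAlgebra.ad_apply]
    rw [hσe, expS_apply_three (by omega) h3, h1, h2]
    have h4 : (2 : k)⁻¹ • (-((2 : k) • e)) = -e := by
      rw [smul_neg, smul_smul, inv_mul_cancel₀ (two_ne_zero), one_smul]
    rw [h4]
    abel
  have hσ : ∀ h : H, σe (σf (σe ((h : H) : L))) = ((h : H) : L) - α h • ((c : H) : L) := by
    intro h
    simp only [hσeh h, map_sub, map_smul, map_add, hσfh h, hσfe, hσef, hσee, hσec]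
    module
  -- weight space mapping
  set ν : Module.Dual k H := μ - μ c • (α : Module.Dual k H) with hν
  have hwt : ∀ v ∈ wtSpace k L H M μ, θ v ∈ wtSpace k L H M ν := by
    intro v hv h
    set a := α h with ha
    set h' : H := h - a • c with hh'
    have hah' : α h' = -a := by
      rw [hh', map_sub, map_smul, hαc, smul_eq_mul, ha]
      ring
    have hcoe : ((h' : H) : L) = ((h : H) : L) - a • ((c : H) : L) := by
      rw [hh']
      rfl
    have hσh' : σe (σf (σe ((h' : H) : L))) = ((h : H) : L) := by
      rw [hσ h', hah', hcoe]
      module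
    have hv' : toEnd k L M ((h' : H) : L) v = μ h' • v := hv h'
    have hμh' : μ h' = ν h := by
      rw [hh', map_sub, map_smul, hν]
      simp only [LinearMap.sub_apply, LinearMap.smul_apply, smul_eq_mul,
        LieModule.Weight.toLinear_apply, ha]
      ring
    calc ⁅((h : H) : L), θ v⁆ = toEnd k L M ((h : H) : L) (θ v) := rfl
      _ = (toEnd k L M (σe (σf (σe ((h' : H) : L)))) * θ) v := by
          rw [hσh']; rfl
      _ = (θ * toEnd k L M ((h' : H) : L)) v := by rw [← hθz]
      _ = θ (toEnd k L M ((h' : H) : L) v) := rfl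
      _ = θ (μ h' • v) := by rw [hv']
      _ = μ h' • θ v := by rw [map_smul]
      _ = ν h • θ v := by rw [hμh']
  -- conclude via finrank
  have hinj : Function.Injective θ := ((Module.End.isUnit_iff θ).mp hθunit).injective
  have hle : Submodule.map θ (wtSpace k L H M μ) ≤ wtSpace k L H M ν := by
    rintro _ ⟨v, hv, rfl⟩
    exact hwt v hv
  calc multW k L H M μ
      = Module.finrank k (Submodule.map θ (wtSpace k L H M μ)) :=
        (Submodule.equivMapOfInjective θ hinj _).finrank_eq
    _ ≤ Module.finrank k (wtSpace k L H M ν) := Submodule.finrank_mono hle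
    _ = multW k L H M ν := rfl

lemma multW_reflection_eq [FiniteDimensional k M] (α : Weight k H L) (hα : α.IsNonZero)
    (μ : Module.Dual k H) :
    multW k L H M (μ - μ (IsKilling.coroot α) • (α : Module.Dual k H)) = multW k L H M μ := by
  refine le_antisymm ?_ (multW_le_reflection k L H M α hα μ)
  have h2 := multW_le_reflection k L H M α hα (μ - μ (IsKilling.coroot α) • (α : Module.Dual k H))
  have hαc : (α : Module.Dual k H) (IsKilling.coroot α) = 2 := by
    rw [LieModule.Weight.toLinear_apply]
    exact IsKilling.root_apply_coroot hα
  have hs : (μ - μ (IsKilling.coroot α) • (α : Module.Dual k H))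
      - (μ - μ (IsKilling.coroot α) • (α : Module.Dual k H)) (IsKilling.coroot α)
        • (α : Module.Dual k H) = μ := by
    simp only [LinearMap.sub_apply, LinearMap.smul_apply, smul_eq_mul, hαc]
    have hcoef : μ (IsKilling.coroot α) - μ (IsKilling.coroot α) * 2
        = -(μ (IsKilling.coroot α)) := by ring
    rw [hcoef]
    module
  rwa [hs] at h2

/-- the weight multiplicities of a finite-dimensional module are invariant
under the Weyl group: `mult_M(w μ) = mult_M(μ)` for all `w ∈ W` and `μ ∈ 𝔥*`. -/
theorem weight_multiplicities_weyl_invariant [FiniteDimensional k M] :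
    ∀ w ∈ lieWeyl k L H, ∀ μ : Module.Dual k H,
      multW k L H M (w μ) = multW k L H M μ := by
  intro w hw
  refine Subgroup.closure_induction
    (p := fun g _ => ∀ μ : Module.Dual k H, multW k L H M (g μ) = multW k L H M μ)
    ?_ ?_ ?_ ?_ hw
  · rintro g ⟨α, hα, hg⟩ μ
    rw [hg μ]
    exact multW_reflection_eq k L H M α hα μ
  · intro μ
    rfl
  · intro g₁ g₂ _ _ ih₁ ih₂ μ
    have h : (g₁ * g₂) μ = g₁ (g₂ μ) := rfl
    rw [h, ih₁, ih₂]
  · intro g _ ih μ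
    have h1 := ih (g⁻¹ μ)
    have h2 : g (g⁻¹ μ) = μ := by
      have : (g * g⁻¹) μ = μ := by rw [mul_inv_cancel]; rfl
      exact this
    rw [h2] at h1
    exact h1.symm
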